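/- If Σ₁ and Σ₂ are signed graphs and Σ₂ is balanced, then the balancing dimension of the Cartesian product Σ₁ □ Σ₂ equals the balancing dimension of Σ₁. -/

import Mathlib

open Finset
open scoped Classical

/-- A signed graph: a simple graph together with a ±1 sign on each edge. -/
structure SGraph (V : Type*) where
  G : SimpleGraph V
  sign : V → V → ℤ
  sign_symm : ∀ u v, sign u v = sign v u
  sign_mem : ∀ u v, G.Adj u v → sign u v = 1 ∨ sign u v = -1

variable {V V1 V2 W : Type*}

/-- `ζ` is a positive k-switching function for the signed graph `S`. -/
def IsPosSwitching [Fintype V] (S : SGraph V) (k : ℕ) (ζ : V → Fin k → ℤ) : Prop :=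
  (∀ v i, ζ v i = -1 ∨ ζ v i = 0 ∨ ζ v i = 1) ∧
  (∀ u v, S.G.Adj u v → (∑ i, ζ u i * ζ v i) ≠ 0) ∧
  (∀ u v, S.G.Adj u v → S.sign u v * Int.sign (∑ i, ζ u i * ζ v i) = 1)

def HasPosSwitching [Fintype V] (S : SGraph V) (k : ℕ) : Prop :=
  ∃ ζ : V → Fin k → ℤ, IsPosSwitching S k ζ

/-- The balancing dimension: least `k ≥ 1` admitting a positive k-switching function. -/
noncomputable def bdim [Fintype V] (S : SGraph V) : ℕ :=
  sInf {k | 1 ≤ k ∧ HasPosSwitching S k}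

/-- A signed graph is balanced iff it can be switched to all-positive by a 1-switching. -/
def SGraph.Balanced [Fintype V] (S : SGraph V) : Prop := HasPosSwitching S 1

/-- The negation of a signed graph. -/
def SGraph.neg (S : SGraph V) : SGraph V where
  G := S.G
  sign := fun u v => - S.sign u v
  sign_symm := fun u v => by (try dsimp only); rw [S.sign_symm]
  sign_mem := fun u v h => by rcases S.sign_mem u v h with h1 | h1 <;> simp [h1]

def SGraph.Antibalanced [Fintype V] (S : SGraph V) : Prop := S.neg.Balanced

/-- Switching equivalence of signed graphs. -/
def SwitchEquiv (S1 S2 : SGraph V) : Prop :=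
  S1.G = S2.G ∧ ∃ η : V → ℤ, (∀ v, η v = 1 ∨ η v = -1) ∧
    ∀ u v, S1.G.Adj u v → S2.sign u v = η u * S1.sign u v * η v

/-- The Cartesian product of signed graphs. -/
noncomputable def cartProd (S1 : SGraph V1) (S2 : SGraph V2) : SGraph (V1 × V2) where
  G := S1.G □ S2.G
  sign := fun p q => if p.2 = q.2 then S1.sign p.1 q.1 else S2.sign p.2 q.2
  sign_symm := by
    intro u v
    (try dsimp only)
    rcases eq_or_ne u.2 v.2 with h | h
    · rw [if_pos h, if_pos h.symm, S1.sign_symm]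
    · rw [if_neg h, if_neg (Ne.symm h), S2.sign_symm]
  sign_mem := by
    intro u v h
    (try dsimp only)
    rcases (SimpleGraph.boxProd_adj.mp h) with ⟨h1, h2⟩ | ⟨h1, h2⟩
    · rw [if_pos h2]; exact S1.sign_mem _ _ h1
    · rw [if_neg h1.ne]; exact S2.sign_mem _ _ h1
/-- The HG-lexicographic product of signed graphs. -/
noncomputable def lexHG (S1 : SGraph V1) (S2 : SGraph V2) : SGraph (V1 × V2) where
  G := { Adj := fun p q => S1.G.Adj p.1 q.1 ∨ (p.1 = q.1 ∧ S2.G.Adj p.2 q.2)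
         symm := by
           refine ⟨?_⟩
           rintro p q (h | ⟨h1, h2⟩)
           · exact Or.inl h.symm
           · exact Or.inr ⟨h1.symm, h2.symm⟩
         loopless := by
           refine ⟨?_⟩
           rintro p (h | ⟨_, h⟩)
           · exact S1.G.irrefl h
           · exact S2.G.irrefl h }
  sign := fun p q => if p.1 = q.1 then S2.sign p.2 q.2 else S1.sign p.1 q.1
  sign_symm := by
    intro u v
    (try dsimp only)
    rcases eq_or_ne u.1 v.1 with h | h
    · rw [if_pos h, if_pos h.symm, S2.sign_symm]
    · rw [if_neg h, if_neg (Ne.symm h), S1.sign_symm]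
  sign_mem := by
    rintro p q (h | ⟨h1, h2⟩)
    · (try dsimp only); rw [if_neg h.ne]; exact S1.sign_mem _ _ h
    · (try dsimp only); rw [if_pos h1]; exact S2.sign_mem _ _ h2

/-- The BCD-lexicographic product of signed graphs. -/
noncomputable def lexBCD (S1 : SGraph V1) (S2 : SGraph V2) : SGraph (V1 × V2) where
  G := { Adj := fun p q => S1.G.Adj p.1 q.1 ∨ (p.1 = q.1 ∧ S2.G.Adj p.2 q.2)
         symm := by
           refine ⟨?_⟩
           rintro p q (h | ⟨h1, h2⟩)
           · exact Or.inl h.symm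
           · exact Or.inr ⟨h1.symm, h2.symm⟩
         loopless := by
           refine ⟨?_⟩
           rintro p (h | ⟨_, h⟩)
           · exact S1.G.irrefl h
           · exact S2.G.irrefl h }
  sign := fun p q =>
    if S2.G.Adj p.2 q.2 then
      (if S1.G.Adj p.1 q.1 then S1.sign p.1 q.1 * S2.sign p.2 q.2 else S2.sign p.2 q.2)
    else S1.sign p.1 q.1
  sign_symm := by
    intro u v
    (try dsimp only)
    rw [S1.G.adj_comm v.1 u.1, S2.G.adj_comm v.2 u.2, S1.sign_symm v.1 u.1,
      S2.sign_symm v.2 u.2]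
  sign_mem := by
    rintro p q (h | ⟨h1, h2⟩) <;> (try dsimp only)
    · by_cases h2 : S2.G.Adj p.2 q.2
      · rw [if_pos h2, if_pos h]
        rcases S1.sign_mem _ _ h with e1 | e1 <;> rcases S2.sign_mem _ _ h2 with e2 | e2 <;>
          simp [e1, e2]
      · rw [if_neg h2]; exact S1.sign_mem _ _ h
    · rw [if_pos h2, if_neg (h1 ▸ S1.G.irrefl)]
      exact S2.sign_mem _ _ h2

/-- The tensor product of signed graphs. -/
def tensorProd (S1 : SGraph V1) (S2 : SGraph V2) : SGraph (V1 × V2) where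
  G := { Adj := fun p q => S1.G.Adj p.1 q.1 ∧ S2.G.Adj p.2 q.2
         symm := ⟨fun p q ⟨h1, h2⟩ => ⟨h1.symm, h2.symm⟩⟩
         loopless := ⟨fun p ⟨h1, _⟩ => S1.G.irrefl h1⟩ }
  sign := fun p q => S1.sign p.1 q.1 * S2.sign p.2 q.2
  sign_symm := by
    intro u v
    (try dsimp only)
    rw [S1.sign_symm, S2.sign_symm]
  sign_mem := by
    rintro p q ⟨h1, h2⟩
    (try dsimp only)
    rcases S1.sign_mem _ _ h1 with e1 | e1 <;> rcases S2.sign_mem _ _ h2 with e2 | e2 <;>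
      simp [e1, e2]

/-- The strong product of signed graphs. -/
noncomputable def strongProd (S1 : SGraph V1) (S2 : SGraph V2) : SGraph (V1 × V2) where
  G := { Adj := fun p q => (S1.G.Adj p.1 q.1 ∧ p.2 = q.2) ∨ (p.1 = q.1 ∧ S2.G.Adj p.2 q.2) ∨
           (S1.G.Adj p.1 q.1 ∧ S2.G.Adj p.2 q.2)
         symm := by
           refine ⟨?_⟩
           rintro p q (⟨h1, h2⟩ | ⟨h1, h2⟩ | ⟨h1, h2⟩)
           · exact Or.inl ⟨h1.symm, h2.symm⟩
           · exact Or.inr (Or.inl ⟨h1.symm, h2.symm⟩)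
           · exact Or.inr (Or.inr ⟨h1.symm, h2.symm⟩)
         loopless := by
           refine ⟨?_⟩
           rintro p (⟨h1, _⟩ | ⟨_, h2⟩ | ⟨h1, _⟩)
           · exact S1.G.irrefl h1
           · exact S2.G.irrefl h2
           · exact S1.G.irrefl h1 }
  sign := fun p q =>
    if p.1 = q.1 then S2.sign p.2 q.2
    else if p.2 = q.2 then S1.sign p.1 q.1
    else S1.sign p.1 q.1 * S2.sign p.2 q.2
  sign_symm := by
    intro u v
    (try dsimp only)
    rcases eq_or_ne u.1 v.1 with h | h
    · rw [if_pos h, if_pos h.symm, S2.sign_symm]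
    · rw [if_neg h, if_neg (Ne.symm h)]
      rcases eq_or_ne u.2 v.2 with h' | h'
      · rw [if_pos h', if_pos h'.symm, S1.sign_symm]
      · rw [if_neg h', if_neg (Ne.symm h'), S1.sign_symm, S2.sign_symm]
  sign_mem := by
    rintro p q (⟨h1, h2⟩ | ⟨h1, h2⟩ | ⟨h1, h2⟩) <;> (try dsimp only)
    · rw [if_neg h1.ne, if_pos h2]; exact S1.sign_mem _ _ h1
    · rw [if_pos h1]; exact S2.sign_mem _ _ h2
    · rw [if_neg h1.ne, if_neg h2.ne]
      rcases S1.sign_mem _ _ h1 with e1 | e1 <;> rcases S2.sign_mem _ _ h2 with e2 | e2 <;>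
        simp [e1, e2]
/-- The cycle on `ZMod n` (vertices `0,1,…,n-1`) with the single negative edge `{0,1}`. -/
noncomputable def Cneg (n : ℕ) : SGraph (ZMod n) where
  G := { Adj := fun i j => i ≠ j ∧ (i - j = 1 ∨ j - i = 1)
         symm := ⟨fun i j ⟨h1, h2⟩ => ⟨h1.symm, h2.symm⟩⟩
         loopless := ⟨fun i ⟨h1, _⟩ => h1 rfl⟩ }
  sign := fun i j => if (i = 0 ∧ j = 1) ∨ (i = 1 ∧ j = 0) then -1 else 1
  sign_symm := by
    intro u v
    (try dsimp only)
    exact if_congr (by tauto) rfl rfl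
  sign_mem := by
    intro u v _
    (try dsimp only)
    by_cases h : (u = 0 ∧ v = 1) ∨ (u = 1 ∧ v = 0)
    · rw [if_pos h]; exact Or.inr rfl
    · rw [if_neg h]; exact Or.inl rfl

/-- The all-negative complete signed graph on `n` vertices. -/
def Kneg (n : ℕ) : SGraph (Fin n) where
  G := ⊤
  sign := fun _ _ => -1
  sign_symm := fun _ _ => rfl
  sign_mem := fun _ _ _ => Or.inr rfl

/-- The edgeless signed graph on `k` vertices. -/
def Nk (k : ℕ) : SGraph (Fin k) where
  G := ⊥
  sign := fun _ _ => 1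
  sign_symm := fun _ _ => rfl
  sign_mem := fun _ _ h => (h.elim)

/-- The lexicographic product of simple graphs. -/
def lexProdGraph (G : SimpleGraph V1) (H : SimpleGraph V2) : SimpleGraph (V1 × V2) where
  Adj p q := G.Adj p.1 q.1 ∨ (p.1 = q.1 ∧ H.Adj p.2 q.2)
  symm := by
    refine ⟨?_⟩
    rintro p q (h | ⟨h1, h2⟩)
    · exact Or.inl h.symm
    · exact Or.inr ⟨h1.symm, h2.symm⟩
  loopless := by
    refine ⟨?_⟩
    rintro p (h | ⟨_, h⟩)
    · exact G.irrefl h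
    · exact H.irrefl h

lemma sign_sq_one {a : ℤ} (h : a = 1 ∨ a = -1) : a * a = 1 := by
  rcases h with h | h <;> simp [h]

lemma sgn_ne_zero {a : ℤ} (h : a = 1 ∨ a = -1) : a ≠ 0 := by
  rcases h with h | h <;> simp [h]

lemma fwd_switch [Fintype V1] [Fintype V2] (S1 : SGraph V1) (S2 : SGraph V2)
    (h2 : S2.Balanced) {k : ℕ} (hk : 1 ≤ k) (h1 : HasPosSwitching S1 k) :
    HasPosSwitching (cartProd S1 S2) k := by
  obtain ⟨ζ₂, hval2, hnz2, hsgn2⟩ := h2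
  obtain ⟨ζ₁, hval1, hnz1, hsgn1⟩ := h1
  -- the ±1-valued switching for S2
  set η : V2 → ℤ := fun v => if ζ₂ v 0 = 0 then 1 else ζ₂ v 0 with hη
  have hη1 : ∀ v, η v = 1 ∨ η v = -1 := by
    intro v
    by_cases h : ζ₂ v 0 = 0
    · simp [hη, h]
    · rcases hval2 v 0 with h' | h' | h' <;> simp [hη, h, h']
  have hηedge : ∀ v v', S2.G.Adj v v' → S2.sign v v' * Int.sign (η v * η v') = 1 := by
    intro v v' hadj
    have hnz := hnz2 v v' hadj
    rw [Fin.sum_univ_one] at hnz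
    have hv : ζ₂ v 0 ≠ 0 := fun h => hnz (by rw [h, zero_mul])
    have hv' : ζ₂ v' 0 ≠ 0 := fun h => hnz (by rw [h, mul_zero])
    have := hsgn2 v v' hadj
    rw [Fin.sum_univ_one] at this
    simpa [hη, hv, hv'] using this
  -- fix ζ₁ so that every vertex vector is nonzero
  set ζ₁' : V1 → Fin k → ℤ := fun u i =>
    if (∑ j, ζ₁ u j * ζ₁ u j) = 0 then (if i = (⟨0, hk⟩ : Fin k) then 1 else 0) else ζ₁ u i
    with hζ₁'
  have hval1' : ∀ u i, ζ₁' u i = -1 ∨ ζ₁' u i = 0 ∨ ζ₁' u i = 1 := by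
    intro u i
    by_cases h : (∑ j, ζ₁ u j * ζ₁ u j) = 0
    · by_cases h' : i = (⟨0, hk⟩ : Fin k) <;> simp [hζ₁', h, h']
    · simp only [hζ₁', if_neg h]; exact hval1 u i
  have heq : ∀ u u', S1.G.Adj u u' → ∀ i, ζ₁' u i = ζ₁ u i := by
    intro u u' hadj i
    have h : (∑ j, ζ₁ u j * ζ₁ u j) ≠ 0 := by
      intro h
      have hz : ∀ j ∈ Finset.univ, ζ₁ u j = 0 := by
        intro j _
        have := (Finset.sum_eq_zero_iff_of_nonneg
          (fun j _ => mul_self_nonneg (ζ₁ u j))).mp h j (Finset.mem_univ j)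
        exact mul_self_eq_zero.mp this
      exact hnz1 u u' hadj (Finset.sum_eq_zero (fun j _ => by
        rw [hz j (Finset.mem_univ j), zero_mul]))
    simp [hζ₁', h]
  have hpos : ∀ u, 0 < ∑ i, ζ₁' u i * ζ₁' u i := by
    intro u
    by_cases h : (∑ j, ζ₁ u j * ζ₁ u j) = 0
    · have : ∀ i, ζ₁' u i * ζ₁' u i = if i = (⟨0, hk⟩ : Fin k) then 1 else 0 := by
        intro i
        by_cases h' : i = (⟨0, hk⟩ : Fin k) <;> simp [hζ₁', h, h']
      rw [Finset.sum_congr rfl (fun i _ => this i), Finset.sum_ite_eq' Finset.univ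
        (⟨0, hk⟩ : Fin k) (fun _ => (1 : ℤ))]
      simp
    · have hne : (∑ i, ζ₁' u i * ζ₁' u i) ≠ 0 := by
        simpa only [hζ₁', if_neg h] using h
      exact lt_of_le_of_ne (Finset.sum_nonneg (fun i _ => mul_self_nonneg _)) (Ne.symm hne)
  refine ⟨fun p i => η p.2 * ζ₁' p.1 i, ?_, ?_, ?_⟩
  · intro p i
    rcases hη1 p.2 with h | h <;> rcases hval1' p.1 i with h' | h' | h' <;>
      simp [h, h']
  · intro p q hadj
    rcases SimpleGraph.boxProd_adj.mp hadj with ⟨had, he⟩ | ⟨had, he⟩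
    · have hsum : ∑ i, (η p.2 * ζ₁' p.1 i) * (η q.2 * ζ₁' q.1 i)
          = ∑ i, ζ₁ p.1 i * ζ₁ q.1 i := by
        refine Finset.sum_congr rfl (fun i _ => ?_)
        rw [heq p.1 q.1 had i, heq q.1 p.1 had.symm i, ← he]
        have := sign_sq_one (hη1 p.2)
        calc η p.2 * ζ₁ p.1 i * (η p.2 * ζ₁ q.1 i)
            = ζ₁ p.1 i * ζ₁ q.1 i * (η p.2 * η p.2) := by ring
          _ = ζ₁ p.1 i * ζ₁ q.1 i := by rw [this, mul_one]
      rw [hsum]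
      exact hnz1 p.1 q.1 had
    · have hsum : ∑ i, (η p.2 * ζ₁' p.1 i) * (η q.2 * ζ₁' q.1 i)
          = (η p.2 * η q.2) * ∑ i, ζ₁' p.1 i * ζ₁' p.1 i := by
        rw [Finset.mul_sum]
        refine Finset.sum_congr rfl (fun i _ => ?_)
        rw [← he]; ring
      rw [hsum]
      exact mul_ne_zero (mul_ne_zero (sgn_ne_zero (hη1 p.2)) (sgn_ne_zero (hη1 q.2)))
        (ne_of_gt (hpos p.1))
  · intro p q hadj
    rcases SimpleGraph.boxProd_adj.mp hadj with ⟨had, he⟩ | ⟨had, he⟩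
    · have hsum : ∑ i, (η p.2 * ζ₁' p.1 i) * (η q.2 * ζ₁' q.1 i)
          = ∑ i, ζ₁ p.1 i * ζ₁ q.1 i := by
        refine Finset.sum_congr rfl (fun i _ => ?_)
        rw [heq p.1 q.1 had i, heq q.1 p.1 had.symm i, ← he]
        have := sign_sq_one (hη1 p.2)
        calc η p.2 * ζ₁ p.1 i * (η p.2 * ζ₁ q.1 i)
            = ζ₁ p.1 i * ζ₁ q.1 i * (η p.2 * η p.2) := by ring
          _ = ζ₁ p.1 i * ζ₁ q.1 i := by rw [this, mul_one]
      rw [hsum]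
      have : (cartProd S1 S2).sign p q = S1.sign p.1 q.1 := by
        simp [cartProd, he]
      rw [this]
      exact hsgn1 p.1 q.1 had
    · have hsum : ∑ i, (η p.2 * ζ₁' p.1 i) * (η q.2 * ζ₁' q.1 i)
          = (η p.2 * η q.2) * ∑ i, ζ₁' p.1 i * ζ₁' p.1 i := by
        rw [Finset.mul_sum]
        refine Finset.sum_congr rfl (fun i _ => ?_)
        rw [← he]; ring
      rw [hsum]
      have hne : p.2 ≠ q.2 := had.ne
      have : (cartProd S1 S2).sign p q = S2.sign p.2 q.2 := by
        simp [cartProd, hne]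
      rw [this, Int.sign_mul, Int.sign_eq_one_of_pos (hpos p.1), mul_one]
      exact hηedge p.2 q.2 had

lemma bwd_switch [Fintype V1] [Fintype V2] [Nonempty V2] (S1 : SGraph V1) (S2 : SGraph V2)
    {k : ℕ} (h : HasPosSwitching (cartProd S1 S2) k) : HasPosSwitching S1 k := by
  obtain ⟨v0⟩ := ‹Nonempty V2›
  obtain ⟨ζ, hval, hnz, hsgn⟩ := h
  refine ⟨fun u i => ζ (u, v0) i, fun u i => hval _ _, ?_, ?_⟩
  · intro u u' hadj
    exact hnz (u, v0) (u', v0) (SimpleGraph.boxProd_adj.mpr (Or.inl ⟨hadj, rfl⟩))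
  · intro u u' hadj
    have := hsgn (u, v0) (u', v0) (SimpleGraph.boxProd_adj.mpr (Or.inl ⟨hadj, rfl⟩))
    simpa [cartProd] using this

theorem stmt0 [Fintype V1] [Fintype V2] [Nonempty V2] (S1 : SGraph V1) (S2 : SGraph V2)
    (h2 : S2.Balanced) : bdim (cartProd S1 S2) = bdim S1 := by
  unfold bdim
  congr 1
  ext k
  simp only [Set.mem_setOf_eq]
  constructor
  · rintro ⟨hk, hs⟩
    exact ⟨hk, bwd_switch S1 S2 hs⟩
  · rintro ⟨hk, hs⟩
    exact ⟨hk, fwd_switch S1 S2 h2 hk hs⟩
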